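/- Every sorted layout can be transformed into an RC layout without increasing its width or its height: for every sorted p×q layout A there exists a p×q RC layout A' with W(A') ≤ W(A) and H(A') ≤ H(A). -/

import Mathlib

/-- A `p × q` layout: a matrix whose entries are exactly the integers `1, …, p*q`. -/
def IsLayout (p q : ℕ) (A : Fin p → Fin q → ℕ) : Prop :=
  Function.Injective (fun ij : Fin p × Fin q => A ij.1 ij.2) ∧
  (Set.range fun ij : Fin p × Fin q => A ij.1 ij.2) = Set.Icc 1 (p * q)

/-- Width of a layout with respect to side lengths `l`. -/
def layW (l : ℕ → ℕ) {p q : ℕ} (A : Fin p → Fin q → ℕ) : ℕ :=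
  ∑ j : Fin q, Finset.univ.sup fun i : Fin p => l (A i j)

/-- Height of a layout with respect to side lengths `l`. -/
def layH (l : ℕ → ℕ) {p q : ℕ} (A : Fin p → Fin q → ℕ) : ℕ :=
  ∑ i : Fin p, Finset.univ.sup fun j : Fin q => l (A i j)

/-- A layout is sorted if each row and each column is strictly increasing. -/
def IsSorted {p q : ℕ} (A : Fin p → Fin q → ℕ) : Prop :=
  (∀ i, StrictMono (A i)) ∧ (∀ j, StrictMono fun i => A i j)

/-- RC layouts: obtainable from the 1×1 base layout by add-row and add-column operations. -/
inductive IsRC : {p q : ℕ} → (Fin p → Fin q → ℕ) → Prop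
  | base : IsRC (fun (_ : Fin 1) (_ : Fin 1) => 1)
  | addRow {p q : ℕ} {A : Fin p → Fin q → ℕ} (h : IsRC A) :
      IsRC (fun (i : Fin (p + 1)) (j : Fin q) =>
        if hi : (i : ℕ) < p then A ⟨i, hi⟩ j else p * q + (j : ℕ) + 1)
  | addCol {p q : ℕ} {A : Fin p → Fin q → ℕ} (h : IsRC A) :
      IsRC (fun (i : Fin p) (j : Fin (q + 1)) =>
        if hj : (j : ℕ) < q then A i ⟨j, hj⟩ else p * q + (i : ℕ) + 1)

lemma card_lt_aux {p q : ℕ} {A : Fin p → Fin q → ℕ} (hA : IsLayout p q A)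
    {i j t : ℕ} (ht : t ≤ p * q + 1)
    (h : ∀ (a : Fin p) (b : Fin q), A a b < t → (a : ℕ) < i ∧ (b : ℕ) < j) :
    t ≤ i * j + 1 := by
  classical
  rcases Nat.eq_zero_or_pos t with rfl | htpos
  · omega
  have hex : ∀ v ∈ Finset.Icc 1 (t - 1), ∃ ab : Fin p × Fin q, A ab.1 ab.2 = v := by
    intro v hv
    simp only [Finset.mem_Icc] at hv
    have hv' : v ∈ Set.Icc 1 (p * q) := ⟨hv.1, by omega⟩
    rw [← hA.2] at hv'
    obtain ⟨ab, hab⟩ := hv'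
    exact ⟨ab, hab⟩
  set f : ℕ → ℕ × ℕ := fun v =>
    if hv : ∃ ab : Fin p × Fin q, A ab.1 ab.2 = v then
      ((hv.choose.1 : ℕ), (hv.choose.2 : ℕ)) else (0, 0) with hf
  have hcard := Finset.card_le_card_of_injOn f
    (fun v hv => by
      obtain e := hex v hv
      simp only [hf, dif_pos e]
      have hspec := e.choose_spec
      have hlt : A e.choose.1 e.choose.2 < t := by
        have hv2 := Finset.mem_Icc.mp hv
        omega
      obtain ⟨h1, h2⟩ := h _ _ hlt
      exact Finset.mem_product.mpr ⟨Finset.mem_range.mpr h1, Finset.mem_range.mpr h2⟩)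
    (fun u hu v hv huv => by
      obtain e1 := hex u hu
      obtain e2 := hex v hv
      simp only [hf, dif_pos e1, dif_pos e2, Prod.mk.injEq] at huv
      have hc : e1.choose = e2.choose := by
        apply Prod.ext
        · exact Fin.ext huv.1
        · exact Fin.ext huv.2
      calc u = A e1.choose.1 e1.choose.2 := e1.choose_spec.symm
        _ = A e2.choose.1 e2.choose.2 := by rw [hc]
        _ = v := e2.choose_spec)
  simp only [Nat.card_Icc, Finset.card_product, Finset.card_range] at hcard
  omega

lemma rc_props {p q : ℕ} {A : Fin p → Fin q → ℕ} (h : IsRC A) :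
    (∀ i j, 1 ≤ A i j ∧ A i j ≤ p * q) ∧
    (∀ (i : Fin p) (j j' : Fin q), j ≤ j' → A i j ≤ A i j') ∧
    (∀ (i i' : Fin p) (j : Fin q), i ≤ i' → A i j ≤ A i' j) := by
  induction h with
  | base => exact ⟨fun _ _ => ⟨le_refl 1, by norm_num⟩, fun _ _ _ _ => le_refl 1,
      fun _ _ _ _ => le_refl 1⟩
  | @addRow p q A h IH =>
    obtain ⟨Hb, Hr, Hc⟩ := IH
    have hmul : p * q ≤ (p + 1) * q := Nat.mul_le_mul_right q (Nat.le_succ p)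
    refine ⟨?_, ?_, ?_⟩
    · intro i j
      by_cases hi : (i : ℕ) < p
      · simp only [dif_pos hi]
        exact ⟨(Hb ⟨i, hi⟩ j).1, le_trans (Hb ⟨i, hi⟩ j).2 hmul⟩
      · simp only [dif_neg hi]
        have := j.isLt
        constructor
        · omega
        · have : (p + 1) * q = p * q + q := by ring
          omega
    · intro i j j' hjj
      by_cases hi : (i : ℕ) < p
      · simp only [dif_pos hi]
        exact Hr ⟨i, hi⟩ j j' hjj
      · simp only [dif_neg hi]
        have : (j : ℕ) ≤ (j' : ℕ) := hjj
        omega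
    · intro i i' j hii
      have hii' : (i : ℕ) ≤ (i' : ℕ) := hii
      by_cases hi : (i : ℕ) < p
      · by_cases hi' : (i' : ℕ) < p
        · simp only [dif_pos hi, dif_pos hi']
          exact Hc ⟨i, hi⟩ ⟨i', hi'⟩ j hii'
        · simp only [dif_pos hi, dif_neg hi']
          have := (Hb ⟨i, hi⟩ j).2
          omega
      · have hi' : ¬ (i' : ℕ) < p := by omega
        simp only [dif_neg hi, dif_neg hi']
        exact le_refl _
  | @addCol p q A h IH =>
    obtain ⟨Hb, Hr, Hc⟩ := IH
    have hmul : p * q ≤ p * (q + 1) := Nat.mul_le_mul_left p (Nat.le_succ q)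
    refine ⟨?_, ?_, ?_⟩
    · intro i j
      by_cases hj : (j : ℕ) < q
      · simp only [dif_pos hj]
        exact ⟨(Hb i ⟨j, hj⟩).1, le_trans (Hb i ⟨j, hj⟩).2 hmul⟩
      · simp only [dif_neg hj]
        have := i.isLt
        constructor
        · omega
        · have : p * (q + 1) = p * q + p := by ring
          omega
    · intro i j j' hjj
      have hjj' : (j : ℕ) ≤ (j' : ℕ) := hjj
      by_cases hj : (j : ℕ) < q
      · by_cases hj' : (j' : ℕ) < q
        · simp only [dif_pos hj, dif_pos hj']
          exact Hr i ⟨j, hj⟩ ⟨j', hj'⟩ hjj'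
        · simp only [dif_pos hj, dif_neg hj']
          have := (Hb i ⟨j, hj⟩).2
          omega
      · have hj' : ¬ (j' : ℕ) < q := by omega
        simp only [dif_neg hj, dif_neg hj']
        exact le_refl _
    · intro i i' j hii
      by_cases hj : (j : ℕ) < q
      · simp only [dif_pos hj]
        exact Hc i i' ⟨j, hj⟩ hii
      · simp only [dif_neg hj]
        have : (i : ℕ) ≤ (i' : ℕ) := hii
        omega

lemma rc_key (n : ℕ) : ∀ (p q : ℕ), p + q ≤ n → ∀ (hp : 0 < p) (hq : 0 < q) (r c : ℕ → ℕ),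
    (∀ j, j < q → r j ≤ p * j + 1) →
    (∀ i, i < p → c i ≤ i * q + 1) →
    (∀ i j, i < p → j < q → r j ≤ i * j + 1 ∨ c i ≤ i * j + 1) →
    ∃ A' : Fin p → Fin q → ℕ, IsRC A' ∧
      (∀ j : Fin q, r (j : ℕ) ≤ A' ⟨0, hp⟩ j) ∧ (∀ i : Fin p, c (i : ℕ) ≤ A' i ⟨0, hq⟩) := by
  induction n with
  | zero => intro p q h hp hq; omega
  | succ n IH =>
    intro p q hn hp hq r c H1 H2 H3
    by_cases hbase : p = 1 ∧ q = 1
    · obtain ⟨rfl, rfl⟩ := hbase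
      refine ⟨fun _ _ => 1, IsRC.base, ?_, ?_⟩
      · intro j
        have hj : (j : ℕ) = 0 := by omega
        have := H1 0 (by norm_num)
        rw [hj]; simpa using this
      · intro i
        have hi : (i : ℕ) = 0 := by omega
        have := H2 0 (by norm_num)
        rw [hi]; simpa using this
    · by_cases hrow : 2 ≤ p ∧ ∀ j, j < q → r j ≤ (p - 1) * j + 1
      · -- remove last row
        obtain ⟨hp2, hP⟩ := hrow
        obtain ⟨p', rfl⟩ : ∃ p', p = p' + 1 := ⟨p - 1, by omega⟩
        have hp' : 0 < p' := by omega
        obtain ⟨A'', hRC, hr, hc⟩ := IH p' q (by omega) hp' hq r c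
          (fun j hj => by have := hP j hj; simpa using this)
          (fun i hi => H2 i (by omega))
          (fun i j hi hj => H3 i j (by omega) hj)
        refine ⟨_, IsRC.addRow hRC, ?_, ?_⟩
        · intro j
          have h0 : ((⟨0, hp⟩ : Fin (p' + 1)) : ℕ) < p' := hp'
          simp only [dif_pos h0]
          exact hr j
        · intro i
          by_cases hi : (i : ℕ) < p'
          · simp only [dif_pos hi]
            exact hc ⟨i, hi⟩
          · simp only [dif_neg hi]
            have hie : (i : ℕ) = p' := by have := i.isLt; omega
            have := H2 p' (by omega)
            rw [hie]
            omega
      · -- remove last column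
        have hcol : 2 ≤ q ∧ ∀ i, i < p → c i ≤ i * (q - 1) + 1 := by
          by_cases hp1 : p = 1
          · subst hp1
            have hq2 : 2 ≤ q := by
              rcases Nat.lt_or_ge q 2 with h | h
              · exfalso; exact hbase ⟨rfl, by omega⟩
              · exact h
            refine ⟨hq2, ?_⟩
            intro i hi
            have hie : i = 0 := by omega
            subst hie
            have := H2 0 (by norm_num)
            omega
          · have hp2 : 2 ≤ p := by omega
            push_neg at hrow
            obtain ⟨j, hj, hrj⟩ := hrow hp2
            have hq2 : 2 ≤ q := by
              by_contra hq1
              have : j = 0 := by omega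
              subst this
              have := H1 0 (by omega)
              omega
            refine ⟨hq2, ?_⟩
            intro i hi
            by_contra hci
            push_neg at hci
            rcases H3 i j hi hj with h | h
            · have hip : i ≤ p - 1 := by omega
              have := Nat.mul_le_mul_right j hip
              omega
            · have hjq : j ≤ q - 1 := by omega
              have := Nat.mul_le_mul_left i hjq
              omega
        obtain ⟨hq2, hQ⟩ := hcol
        obtain ⟨q', rfl⟩ : ∃ q', q = q' + 1 := ⟨q - 1, by omega⟩
        have hq' : 0 < q' := by omega
        obtain ⟨A'', hRC, hr, hc⟩ := IH p q' (by omega) hp hq' r c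
          (fun j hj => H1 j (by omega))
          (fun i hi => by have := hQ i hi; simpa using this)
          (fun i j hi hj => H3 i j hi (by omega))
        refine ⟨_, IsRC.addCol hRC, ?_, ?_⟩
        · intro j
          by_cases hj : (j : ℕ) < q'
          · simp only [dif_pos hj]
            exact hr ⟨j, hj⟩
          · simp only [dif_neg hj]
            have hje : (j : ℕ) = q' := by have := j.isLt; omega
            have := H1 q' (by omega)
            rw [hje]
            omega
        · intro i
          have h0 : ((⟨0, hq⟩ : Fin (q' + 1)) : ℕ) < q' := hq'
          simp only [dif_pos h0]
          exact hc i

/-- Every sorted `p × q` layout can be transformed into a `p × q` RC layout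
without increasing its width or its height. -/
theorem rc_layout_exists (p q : ℕ) (hp : 0 < p) (hq : 0 < q) (l : ℕ → ℕ)
    (hl : ∀ a b, 1 ≤ a → a ≤ b → l b ≤ l a)
    (A : Fin p → Fin q → ℕ) (hA : IsLayout p q A) (hS : IsSorted A) :
    ∃ A' : Fin p → Fin q → ℕ, IsRC A' ∧
      layW l A' ≤ layW l A ∧ layH l A' ≤ layH l A := by
  classical
  have hmem : ∀ i j, 1 ≤ A i j ∧ A i j ≤ p * q := by
    intro i j
    have : A i j ∈ Set.Icc 1 (p * q) := by
      rw [← hA.2]; exact ⟨(i, j), rfl⟩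
    exact this
  have hrowmono : ∀ (i : Fin p) (j j' : Fin q), j ≤ j' → A i j ≤ A i j' :=
    fun i j j' h => (hS.1 i).monotone h
  have hcolmono : ∀ (i i' : Fin p) (j : Fin q), i ≤ i' → A i j ≤ A i' j :=
    fun i i' j h => (hS.2 j).monotone h
  set r : ℕ → ℕ := fun j => if h : j < q then A ⟨0, hp⟩ ⟨j, h⟩ else 0 with hrdef
  set c : ℕ → ℕ := fun i => if h : i < p then A ⟨i, h⟩ ⟨0, hq⟩ else 0 with hcdef
  have hrval : ∀ (j : Fin q), r (j : ℕ) = A ⟨0, hp⟩ j := by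
    intro j
    simp only [hrdef, dif_pos j.isLt]
  have hcval : ∀ (i : Fin p), c (i : ℕ) = A i ⟨0, hq⟩ := by
    intro i
    simp only [hcdef, dif_pos i.isLt]
  have H1 : ∀ j, j < q → r j ≤ p * j + 1 := by
    intro j hj
    simp only [hrdef, dif_pos hj]
    refine card_lt_aux hA ?_ ?_
    · have := (hmem ⟨0, hp⟩ ⟨j, hj⟩).2; omega
    · intro a b hab
      refine ⟨a.isLt, ?_⟩
      by_contra hb
      push_neg at hb
      have h1 : A ⟨0, hp⟩ ⟨j, hj⟩ ≤ A a ⟨j, hj⟩ :=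
        hcolmono ⟨0, hp⟩ a ⟨j, hj⟩ (by exact Fin.mk_le_of_le_val (Nat.zero_le _))
      have h2 : A a ⟨j, hj⟩ ≤ A a b := hrowmono a ⟨j, hj⟩ b hb
      omega
  have H2 : ∀ i, i < p → c i ≤ i * q + 1 := by
    intro i hi
    simp only [hcdef, dif_pos hi]
    refine card_lt_aux hA
      (by have := (hmem ⟨i, hi⟩ ⟨0, hq⟩).2; omega)
      (fun a b hab => by
        refine ⟨?_, b.isLt⟩
        by_contra ha
        push_neg at ha
        have h1 : A ⟨i, hi⟩ ⟨0, hq⟩ ≤ A a ⟨0, hq⟩ := hcolmono ⟨i, hi⟩ a ⟨0, hq⟩ ha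
        have h2 : A a ⟨0, hq⟩ ≤ A a b := hrowmono a ⟨0, hq⟩ b (Fin.mk_le_of_le_val (Nat.zero_le _))
        omega)
  have H3 : ∀ i j, i < p → j < q → r j ≤ i * j + 1 ∨ c i ≤ i * j + 1 := by
    intro i j hi hj
    by_contra h
    push_neg at h
    obtain ⟨h1, h2⟩ := h
    simp only [hrdef, dif_pos hj] at h1
    simp only [hcdef, dif_pos hi] at h2
    have hle : (i + 1) * (j + 1) ≤ p * q := Nat.mul_le_mul hi hj
    have he : (i + 1) * (j + 1) = i * j + i + j + 1 := by ring
    have := card_lt_aux hA (i := i) (j := j) (t := i * j + 2) (by omega)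
      (fun a b hab => by
        constructor
        · by_contra ha
          push_neg at ha
          have g1 : A ⟨i, hi⟩ ⟨0, hq⟩ ≤ A ⟨i, hi⟩ b :=
            hrowmono ⟨i, hi⟩ ⟨0, hq⟩ b (Fin.mk_le_of_le_val (Nat.zero_le _))
          have g2 : A ⟨i, hi⟩ b ≤ A a b := hcolmono ⟨i, hi⟩ a b ha
          omega
        · by_contra hb
          push_neg at hb
          have g1 : A ⟨0, hp⟩ ⟨j, hj⟩ ≤ A a ⟨j, hj⟩ :=
            hcolmono ⟨0, hp⟩ a ⟨j, hj⟩ (Fin.mk_le_of_le_val (Nat.zero_le _))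
          have g2 : A a ⟨j, hj⟩ ≤ A a b := hrowmono a ⟨j, hj⟩ b hb
          omega)
    omega
  obtain ⟨A', hRC, hr', hc'⟩ := rc_key (p + q) p q le_rfl hp hq r c H1 H2 H3
  obtain ⟨hbnd, hrmono, hcmono⟩ := rc_props hRC
  refine ⟨A', hRC, ?_, ?_⟩
  · unfold layW
    apply Finset.sum_le_sum
    intro j _
    have h0 : Finset.univ.sup (fun i : Fin p => l (A' i j)) ≤ l (A' ⟨0, hp⟩ j) := by
      apply Finset.sup_le
      intro i _
      exact hl _ _ (hbnd ⟨0, hp⟩ j).1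
        (hcmono ⟨0, hp⟩ i j (Fin.mk_le_of_le_val (Nat.zero_le _)))
    have h1 : l (A' ⟨0, hp⟩ j) ≤ l (A ⟨0, hp⟩ j) := by
      apply hl _ _ (hmem ⟨0, hp⟩ j).1
      have := hr' j
      rw [hrval j] at this
      exact this
    have h2 : l (A ⟨0, hp⟩ j) ≤ Finset.univ.sup (fun i : Fin p => l (A i j)) :=
      Finset.le_sup (f := fun i : Fin p => l (A i j)) (Finset.mem_univ (⟨0, hp⟩ : Fin p))
    omega
  · unfold layH
    apply Finset.sum_le_sum
    intro i _
    have h0 : Finset.univ.sup (fun j : Fin q => l (A' i j)) ≤ l (A' i ⟨0, hq⟩) := by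
      apply Finset.sup_le
      intro j _
      exact hl _ _ (hbnd i ⟨0, hq⟩).1
        (hrmono i ⟨0, hq⟩ j (Fin.mk_le_of_le_val (Nat.zero_le _)))
    have h1 : l (A' i ⟨0, hq⟩) ≤ l (A i ⟨0, hq⟩) := by
      apply hl _ _ (hmem i ⟨0, hq⟩).1
      have := hc' i
      rw [hcval i] at this
      exact this
    have h2 : l (A i ⟨0, hq⟩) ≤ Finset.univ.sup (fun j : Fin q => l (A i j)) :=
      Finset.le_sup (f := fun j : Fin q => l (A i j)) (Finset.mem_univ (⟨0, hq⟩ : Fin q))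
    omega
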